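/- Let Q be a quantity space over a scalar system K with basis B. If q, q' ∈ Q and q ~ q', then μ_B(q')•q = μ_B(q)•q'. -/
import Mathlib


/-- A *scalable (commutative) monoid* over a scalar system `K ⊆ F`:
`K` is a subset of the field `F` closed under addition, containing `1`,
closed under multiplication and under inverses of nonzero elements
(so the nonzero elements of `K` form a group under multiplication),
together with a scalar multiplication `smul` satisfying the axioms
`1 • q = q`, `α • (β • q) = (α β) • q` and `α • (q * q') = (α • q) * q'`
for scalars in `K`. -/
structure ScalableMonoid (F : Type*) [Field F] (Q : Type*) [CommMonoid Q] where
  K : Set F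
  one_mem : (1 : F) ∈ K
  add_mem : ∀ {a b : F}, a ∈ K → b ∈ K → a + b ∈ K
  mul_mem : ∀ {a b : F}, a ∈ K → b ∈ K → a * b ∈ K
  inv_mem : ∀ {a : F}, a ∈ K → a ≠ 0 → a⁻¹ ∈ K
  smul : F → Q → Q
  smul_one : ∀ q : Q, smul 1 q = q
  smul_smul : ∀ {a b : F}, a ∈ K → b ∈ K → ∀ q : Q, smul a (smul b q) = smul (a * b) q
  smul_mul : ∀ {a : F}, a ∈ K → ∀ q q' : Q, smul a (q * q') = smul a q * q'

/-- `b : Fin n → Qˣ` (a list of invertible quantities) is a basis for the scalable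
monoid `M` if every quantity has a unique expansion `q = μ • ∏ i, b i ^ k i`
with `μ ∈ K` and integer exponents `k`. -/
def ScalableMonoid.IsBasis {F : Type*} [Field F] {Q : Type*} [CommMonoid Q]
    (M : ScalableMonoid F Q) {n : ℕ} (b : Fin n → Qˣ) : Prop :=
  ∀ q : Q, ∃! p : M.K × (Fin n → ℤ),
    q = M.smul (p.1 : F) (↑(∏ i, b i ^ p.2 i) : Q)

/-- A quantity space is a scalable monoid having a (finite) basis. -/
def ScalableMonoid.IsQuantitySpace {F : Type*} [Field F] {Q : Type*} [CommMonoid Q]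
    (M : ScalableMonoid F Q) : Prop :=
  ∃ (n : ℕ) (b : Fin n → Qˣ), M.IsBasis b

/-- The measure `μ_B(q)`: the unique scalar in the expansion of `q` relative to
the basis `B`. -/
noncomputable def ScalableMonoid.measure {F : Type*} [Field F] {Q : Type*} [CommMonoid Q]
    (M : ScalableMonoid F Q) {n : ℕ} {b : Fin n → Qˣ} (hB : M.IsBasis b) (q : Q) : F :=
  ((hB q).choose.1 : F)

/-- Quantities `q, q'` are equidimensional (`q ~ q'`) if `α • q = β • q'`
for some scalars `α, β ∈ K`. -/
def ScalableMonoid.Equidim {F : Type*} [Field F] {Q : Type*} [CommMonoid Q]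
    (M : ScalableMonoid F Q) (q q' : Q) : Prop :=
  ∃ α β : F, α ∈ M.K ∧ β ∈ M.K ∧ M.smul α q = M.smul β q'

/-- if `q ~ q'` then `μ_B(q')•q = μ_B(q)•q'`. -/
theorem equidim_measure_smul {F : Type*} [Field F] {Q : Type*} [CommMonoid Q]
    (M : ScalableMonoid F Q) {n : ℕ} {b : Fin n → Qˣ} (hB : M.IsBasis b)
    (q q' : Q) (h : M.Equidim q q') :
    M.smul (M.measure hB q') q = M.smul (M.measure hB q) q' := by
  obtain ⟨α, β, hα, hβ, hαβ⟩ := h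
  have hq := (hB q).choose_spec.1
  have hq' := (hB q').choose_spec.1
  set p := (hB q).choose with hp
  set p' := (hB q').choose with hp'
  have h1 : M.smul α q = M.smul (α * (p.1 : F)) (↑(∏ i, b i ^ p.2 i) : Q) := by
    rw [hq, M.smul_smul hα p.1.2]
  have h2 : M.smul α q = M.smul (β * (p'.1 : F)) (↑(∏ i, b i ^ p'.2 i) : Q) := by
    rw [hαβ, hq', M.smul_smul hβ p'.1.2]
  have key : (⟨⟨α * (p.1 : F), M.mul_mem hα p.1.2⟩, p.2⟩ : M.K × (Fin n → ℤ))
      = ⟨⟨β * (p'.1 : F), M.mul_mem hβ p'.1.2⟩, p'.2⟩ :=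
    (hB (M.smul α q)).unique h1 h2
  have hk : p.2 = p'.2 := by
    have h3 := congrArg (fun x : M.K × (Fin n → ℤ) => x.2) key
    exact h3
  show M.smul (p'.1 : F) q = M.smul (p.1 : F) q'
  rw [hq, hq', M.smul_smul p'.1.2 p.1.2, M.smul_smul p.1.2 p'.1.2, hk,
    mul_comm]
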